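/- arXiv:1608.04791 — 3 statements merged into one kernel-verified Lean document; each statement's English description precedes it below -/
import Mathlib

section
/- With the choice b = ⌈k / log₂ k⌉, the number of base-b digits of any k-bit number is O(k / log k): there exists a constant C such that for all sufficiently large k, every natural number n < 2^k has at most C·k / log₂ k digits in base ⌈k / log₂ k⌉. -/
open Real

/-- Number of base-`b` digits of `n`: the least `d` with `n < b^d`, with `d = 1` for `n = 0`. -/
def numDigits (b n : ℕ) : ℕ := if n = 0 then 1 else Nat.log b n + 1

/-- With the base chosen as `b = ⌈k / log₂ k⌉`, every `k`-bit number has `O(k / log k)` digits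
in base `b`: there is a constant `C` such that for all sufficiently large `k`, every `n < 2^k`
has at most `C·k / log₂ k` digits in base `⌈k / log₂ k⌉`. -/
theorem digits_base_k_div_log :
    ∃ C : ℝ, ∃ K₀ : ℕ, ∀ k : ℕ, K₀ ≤ k → ∀ n : ℕ, n < 2 ^ k →
      (numDigits ⌈(k : ℝ) / Real.logb 2 k⌉₊ n : ℝ) ≤ C * k / Real.logb 2 k := by
  refine ⟨5, 81, fun k hk n hn => ?_⟩
  have hk2 : (81 : ℝ) ≤ k := by exact_mod_cast hk
  have hkpos : (0 : ℝ) < k := by linarith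
  have hlog2 : (0.6931471803 : ℝ) < Real.log 2 := Real.log_two_gt_d9
  have hlog2' : Real.log 2 < 0.6931471808 := Real.log_two_lt_d9
  have hlogk : (0 : ℝ) < Real.log k := Real.log_pos (by linarith)
  have hrdef : Real.logb 2 k = Real.log k / Real.log 2 := rfl
  set r : ℝ := Real.logb 2 k with hr
  have hrpos : 0 < r := by rw [hrdef]; positivity
  -- √k ≥ 9
  have hs9 : (9 : ℝ) ≤ Real.sqrt k := by
    have : Real.sqrt 81 ≤ Real.sqrt k := Real.sqrt_le_sqrt hk2
    rwa [show (81 : ℝ) = 9 ^ 2 by norm_num, Real.sqrt_sq (by norm_num : (0:ℝ) ≤ 9)] at this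
  have hssq : Real.sqrt k * Real.sqrt k = k := Real.mul_self_sqrt hkpos.le
  -- log k ≤ 2√k - 2
  have hlks : Real.log k ≤ 2 * Real.sqrt k - 2 := by
    have h1 : Real.log (Real.sqrt k) ≤ Real.sqrt k - 1 :=
      Real.log_le_sub_one_of_pos (Real.sqrt_pos.mpr hkpos)
    have h2 : Real.log (Real.sqrt k) = Real.log k / 2 := Real.log_sqrt hkpos.le
    linarith
  -- r ≤ k and r ≤ 3√k
  have hrk : r ≤ k := by
    rw [hrdef, div_le_iff₀ (by linarith : (0:ℝ) < Real.log 2)]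
    nlinarith
  have hr3s : r ≤ 3 * Real.sqrt k := by
    rw [hrdef, div_le_iff₀ (by linarith : (0:ℝ) < Real.log 2)]
    nlinarith
  have hkr1 : (1 : ℝ) ≤ k / r := (one_le_div hrpos).mpr hrk
  set b : ℕ := ⌈(k : ℝ) / r⌉₊ with hb
  have hbk : (k : ℝ) / r ≤ b := Nat.le_ceil _
  have hbpos : (0 : ℝ) < b := lt_of_lt_of_le (by linarith) hbk
  -- log b ≥ (1/4) log k
  have hlog3 : Real.log 3 ≤ Real.log k / 4 := by
    have : Real.log 81 ≤ Real.log k := Real.log_le_log (by norm_num) hk2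
    rw [show (81 : ℝ) = 3 ^ 4 by norm_num, Real.log_pow] at this
    push_cast at this
    linarith
  have hlogr : Real.log r ≤ Real.log 3 + Real.log k / 2 := by
    have h1 : Real.log r ≤ Real.log (3 * Real.sqrt k) := Real.log_le_log hrpos hr3s
    rw [Real.log_mul (by norm_num) (by positivity), Real.log_sqrt hkpos.le] at h1
    linarith
  have hlogb : Real.log k / 4 ≤ Real.log b := by
    have h1 : Real.log ((k : ℝ) / r) ≤ Real.log b := Real.log_le_log (by positivity) hbk
    rw [Real.log_div hkpos.ne' hrpos.ne'] at h1
    linarith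
  -- key bound
  have key : ∀ m : ℕ, m ≠ 0 → m < 2 ^ k → (Nat.log b m : ℝ) * Real.log k ≤ 4 * k * Real.log 2 := by
    intro m hm hmk
    have hp : b ^ Nat.log b m ≤ m := Nat.pow_log_le_self b hm
    have hpr : ((b : ℝ)) ^ Nat.log b m ≤ (2 : ℝ) ^ k := by
      calc ((b : ℝ)) ^ Nat.log b m ≤ m := by exact_mod_cast hp
        _ ≤ 2 ^ k := by exact_mod_cast hmk.le
    have hlg : (Nat.log b m : ℝ) * Real.log b ≤ k * Real.log 2 := by
      have := Real.log_le_log (by positivity) hpr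
      rwa [Real.log_pow, Real.log_pow] at this
    have h0 : (0 : ℝ) ≤ (Nat.log b m : ℝ) := Nat.cast_nonneg _
    nlinarith
  -- conclude
  rw [numDigits]
  have hgoal : (5 : ℝ) * k / r = 5 * (k / r) := by ring
  by_cases h0 : n = 0
  · simp only [h0, if_pos rfl]
    rw [hgoal]
    push_cast
    linarith
  · rw [if_neg h0]
    have hL : (Nat.log b n : ℝ) ≤ 4 * (k / r) := by
      have hk4 : (Nat.log b n : ℝ) * Real.log k ≤ 4 * k * Real.log 2 := key n h0 hn
      rw [hrdef, div_div_eq_mul_div,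
        show (4:ℝ) * ((k:ℝ) * Real.log 2 / Real.log k) = 4 * k * Real.log 2 / Real.log k
          from by ring,
        le_div_iff₀ hlogk]
      exact hk4
    rw [hgoal]
    push_cast
    linarith
end

section
/- Scaling preserves connectivity: if S ⊆ ℤ² is connected in the grid-adjacency sense, then for any positive integer c the scaled shape c·S = { (c·x + i, c·y + j) : (x,y) ∈ S, 0 ≤ i, j < c } is also connected in the grid-adjacency sense. -/
/-- The grid-adjacency graph of a set `S ⊆ ℤ²`: vertices are the points of `S`, with an edge
between two points at L¹-distance exactly 1. -/
def gridGraph (S : Set (ℤ × ℤ)) : SimpleGraph S where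
  Adj p q := ((p : ℤ × ℤ).1 - (q : ℤ × ℤ).1).natAbs + ((p : ℤ × ℤ).2 - (q : ℤ × ℤ).2).natAbs = 1
  symm := by
    constructor
    intro p q h
    rw [show ((q : ℤ × ℤ).1 - (p : ℤ × ℤ).1) = -((p : ℤ × ℤ).1 - (q : ℤ × ℤ).1) by ring,
      show ((q : ℤ × ℤ).2 - (p : ℤ × ℤ).2) = -((p : ℤ × ℤ).2 - (q : ℤ × ℤ).2) by ring,
      Int.natAbs_neg, Int.natAbs_neg]
    exact h
  loopless := by constructor; intro p h; simp at h

/-- The scale-`c` version of a shape `S ⊆ ℤ²`: each point is replaced by a `c × c` block. -/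
def scaleShape (c : ℤ) (S : Set (ℤ × ℤ)) : Set (ℤ × ℤ) :=
  {p | ∃ q ∈ S, ∃ i j : ℤ, 0 ≤ i ∧ i < c ∧ 0 ≤ j ∧ j < c ∧
    p = (c * q.1 + i, c * q.2 + j)}

lemma grid_adj {T : Set (ℤ × ℤ)} {p q : T}
    (h : ((p : ℤ × ℤ).1 - (q : ℤ × ℤ).1).natAbs + ((p : ℤ × ℤ).2 - (q : ℤ × ℤ).2).natAbs = 1) :
    (gridGraph T).Adj p q := h

lemma grid_reach_of_eq {T : Set (ℤ × ℤ)} {p q : T} (h : (p : ℤ × ℤ) = q) :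
    (gridGraph T).Reachable p q := by
  rw [Subtype.ext h]

lemma mem_scale {c : ℤ} {S : Set (ℤ × ℤ)} {q : ℤ × ℤ} (hq : q ∈ S) {i j : ℤ}
    (hi0 : 0 ≤ i) (hic : i < c) (hj0 : 0 ≤ j) (hjc : j < c) :
    (c * q.1 + i, c * q.2 + j) ∈ scaleShape c S :=
  ⟨q, hq, i, j, hi0, hic, hj0, hjc, rfl⟩

lemma corner_mem {c : ℤ} {S : Set (ℤ × ℤ)} (hc : 0 < c) {q : ℤ × ℤ} (hq : q ∈ S) :
    ((c * q.1, c * q.2) : ℤ × ℤ) ∈ scaleShape c S :=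
  ⟨q, hq, 0, 0, le_rfl, hc, le_rfl, hc, by simp⟩

lemma reach_seg_horiz (T : Set (ℤ × ℤ)) (x y : ℤ) (hp : (x, y) ∈ T) (d : ℤ) (hd : 0 ≤ d)
    (h : ∀ t : ℤ, 0 ≤ t → t ≤ d → (x + t, y) ∈ T) (hq : (x + d, y) ∈ T) :
    (gridGraph T).Reachable ⟨(x, y), hp⟩ ⟨(x + d, y), hq⟩ := by
  lift d to ℕ using hd
  induction d with
  | zero => exact grid_reach_of_eq (by simp)
  | succ n ih =>
    have hmid : (x + (n : ℤ), y) ∈ T :=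
      h n (Int.natCast_nonneg n) (by push_cast; linarith)
    have h1 := ih (fun t ht htn => h t ht (by push_cast at htn ⊢; linarith)) hmid
    refine h1.trans (SimpleGraph.Adj.reachable (grid_adj ?_))
    show ((x + (n : ℤ)) - (x + ((n + 1 : ℕ) : ℤ))).natAbs + (y - y).natAbs = 1
    rw [show (x + (n : ℤ)) - (x + ((n + 1 : ℕ) : ℤ)) = -1 by push_cast; ring, sub_self]
    decide

lemma reach_seg_vert (T : Set (ℤ × ℤ)) (x y : ℤ) (hp : (x, y) ∈ T) (d : ℤ) (hd : 0 ≤ d)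
    (h : ∀ t : ℤ, 0 ≤ t → t ≤ d → (x, y + t) ∈ T) (hq : (x, y + d) ∈ T) :
    (gridGraph T).Reachable ⟨(x, y), hp⟩ ⟨(x, y + d), hq⟩ := by
  lift d to ℕ using hd
  induction d with
  | zero => exact grid_reach_of_eq (by simp)
  | succ n ih =>
    have hmid : (x, y + (n : ℤ)) ∈ T :=
      h n (Int.natCast_nonneg n) (by push_cast; linarith)
    have h1 := ih (fun t ht htn => h t ht (by push_cast at htn ⊢; linarith)) hmid
    refine h1.trans (SimpleGraph.Adj.reachable (grid_adj ?_))
    show (x - x).natAbs + ((y + (n : ℤ)) - (y + ((n + 1 : ℕ) : ℤ))).natAbs = 1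
    rw [show (y + (n : ℤ)) - (y + ((n + 1 : ℕ) : ℤ)) = -1 by push_cast; ring, sub_self]
    decide

lemma point_reach_corner {c : ℤ} {S : Set (ℤ × ℤ)} (hc : 0 < c) {q : ℤ × ℤ} (hq : q ∈ S)
    {i j : ℤ} (hi0 : 0 ≤ i) (hic : i < c) (hj0 : 0 ≤ j) (hjc : j < c) :
    (gridGraph (scaleShape c S)).Reachable
      ⟨(c * q.1 + i, c * q.2 + j), mem_scale hq hi0 hic hj0 hjc⟩
      ⟨(c * q.1, c * q.2), corner_mem hc hq⟩ := by
  have hbase : ((c * q.1 + i, c * q.2) : ℤ × ℤ) ∈ scaleShape c S := by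
    simpa using mem_scale hq hi0 hic (le_refl 0) hc
  have rvert : (gridGraph (scaleShape c S)).Reachable
      ⟨(c * q.1 + i, c * q.2), hbase⟩ ⟨(c * q.1 + i, c * q.2 + j), mem_scale hq hi0 hic hj0 hjc⟩ :=
    reach_seg_vert _ _ _ hbase j hj0
      (fun t ht htj => mem_scale hq hi0 hic ht (lt_of_le_of_lt htj hjc)) _
  have hcorner : ((c * q.1, c * q.2) : ℤ × ℤ) ∈ scaleShape c S := corner_mem hc hq
  have rhoriz : (gridGraph (scaleShape c S)).Reachable
      ⟨(c * q.1, c * q.2), hcorner⟩ ⟨(c * q.1 + i, c * q.2), hbase⟩ :=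
    reach_seg_horiz _ _ _ hcorner i hi0
      (fun t ht hti => by simpa using mem_scale hq ht (lt_of_le_of_lt hti hic) (le_refl 0) hc) _
  exact rvert.symm.trans rhoriz.symm

lemma corner_step_right {c : ℤ} {S : Set (ℤ × ℤ)} (hc : 0 < c) {a b : ℤ × ℤ}
    (ha : a ∈ S) (hb : b ∈ S) (h1 : b.1 = a.1 + 1) (h2 : b.2 = a.2) :
    (gridGraph (scaleShape c S)).Reachable
      ⟨(c * a.1, c * a.2), corner_mem hc ha⟩ ⟨(c * b.1, c * b.2), corner_mem hc hb⟩ := by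
  have hend : ((c * a.1 + c, c * a.2) : ℤ × ℤ) ∈ scaleShape c S := by
    have := corner_mem hc hb
    simpa [h1, h2, mul_add] using this
  have hmemseg : ∀ t : ℤ, 0 ≤ t → t ≤ c → ((c * a.1 + t, c * a.2) : ℤ × ℤ) ∈ scaleShape c S := by
    intro t ht htc
    rcases lt_or_eq_of_le htc with hlt | heq
    · simpa using mem_scale ha ht hlt (le_refl 0) hc
    · rw [heq]; exact hend
  have r := reach_seg_horiz _ _ _ (corner_mem hc ha) c hc.le hmemseg hend
  exact r.trans (grid_reach_of_eq
    (show ((c * a.1 + c, c * a.2) : ℤ × ℤ) = (c * b.1, c * b.2) by rw [h1, h2]; simp [mul_add]))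

lemma corner_step_up {c : ℤ} {S : Set (ℤ × ℤ)} (hc : 0 < c) {a b : ℤ × ℤ}
    (ha : a ∈ S) (hb : b ∈ S) (h1 : b.1 = a.1) (h2 : b.2 = a.2 + 1) :
    (gridGraph (scaleShape c S)).Reachable
      ⟨(c * a.1, c * a.2), corner_mem hc ha⟩ ⟨(c * b.1, c * b.2), corner_mem hc hb⟩ := by
  have hend : ((c * a.1, c * a.2 + c) : ℤ × ℤ) ∈ scaleShape c S := by
    have := corner_mem hc hb
    simpa [h1, h2, mul_add] using this
  have hmemseg : ∀ t : ℤ, 0 ≤ t → t ≤ c → ((c * a.1, c * a.2 + t) : ℤ × ℤ) ∈ scaleShape c S := by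
    intro t ht htc
    rcases lt_or_eq_of_le htc with hlt | heq
    · simpa using mem_scale ha (le_refl 0) hc ht hlt
    · rw [heq]; exact hend
  have r := reach_seg_vert _ _ _ (corner_mem hc ha) c hc.le hmemseg hend
  exact r.trans (grid_reach_of_eq
    (show ((c * a.1, c * a.2 + c) : ℤ × ℤ) = (c * b.1, c * b.2) by rw [h1, h2]; simp [mul_add]))

lemma corner_adj_reach {c : ℤ} {S : Set (ℤ × ℤ)} (hc : 0 < c) {a b : S}
    (hadj : (gridGraph S).Adj a b) :
    (gridGraph (scaleShape c S)).Reachable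
      ⟨(c * (a : ℤ × ℤ).1, c * (a : ℤ × ℤ).2), corner_mem hc a.2⟩
      ⟨(c * (b : ℤ × ℤ).1, c * (b : ℤ × ℤ).2), corner_mem hc b.2⟩ := by
  have h : ((a : ℤ × ℤ).1 - (b : ℤ × ℤ).1).natAbs + ((a : ℤ × ℤ).2 - (b : ℤ × ℤ).2).natAbs = 1 :=
    hadj
  rcases Nat.add_eq_one_iff.mp h with ⟨h1, h2⟩ | ⟨h1, h2⟩
  · have e1 : (a : ℤ × ℤ).1 = (b : ℤ × ℤ).1 := by
      have := Int.natAbs_eq_zero.mp h1; linarith [this]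
    rcases Int.natAbs_eq_iff.mp h2 with hd | hd
    · exact (corner_step_up hc b.2 a.2 e1 (by push_cast at hd; linarith)).symm
    · exact corner_step_up hc a.2 b.2 e1.symm (by push_cast at hd; linarith)
  · have e2 : (a : ℤ × ℤ).2 = (b : ℤ × ℤ).2 := by
      have := Int.natAbs_eq_zero.mp h2; linarith [this]
    rcases Int.natAbs_eq_iff.mp h1 with hd | hd
    · exact (corner_step_right hc b.2 a.2 (by push_cast at hd; linarith) e2).symm
    · exact corner_step_right hc a.2 b.2 (by push_cast at hd; linarith) e2.symm

lemma corner_reach {c : ℤ} {S : Set (ℤ × ℤ)} (hc : 0 < c) {a b : S}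
    (h : (gridGraph S).Reachable a b) :
    (gridGraph (scaleShape c S)).Reachable
      ⟨(c * (a : ℤ × ℤ).1, c * (a : ℤ × ℤ).2), corner_mem hc a.2⟩
      ⟨(c * (b : ℤ × ℤ).1, c * (b : ℤ × ℤ).2), corner_mem hc b.2⟩ := by
  obtain ⟨w⟩ := h
  induction w with
  | nil => exact SimpleGraph.Reachable.refl _
  | cons hadj _ ih => exact (corner_adj_reach hc hadj).trans ih

/-- Scaling preserves connectivity: if `S` is grid-connected then so is its scale-`c`
version, for any positive integer `c`. -/
theorem scale_preserves_connected (S : Set (ℤ × ℤ)) (c : ℤ) (hc : 0 < c)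
    (hconn : (gridGraph S).Connected) : (gridGraph (scaleShape c S)).Connected := by
  obtain ⟨⟨q0, hq0⟩⟩ := hconn.nonempty
  have hne : Nonempty ↥(scaleShape c S) := ⟨⟨_, corner_mem hc hq0⟩⟩
  constructor
  rintro ⟨p, hp⟩ ⟨p', hp'⟩
  obtain ⟨q, hq, i, j, hi0, hic, hj0, hjc, rfl⟩ := hp
  obtain ⟨q', hq', i', j', hi0', hic', hj0', hjc', rfl⟩ := hp'
  have r1 := point_reach_corner hc hq hi0 hic hj0 hjc
  have r2 := point_reach_corner hc hq' hi0' hic' hj0' hjc'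
  have r3 := corner_reach hc (hconn.preconnected ⟨q, hq⟩ ⟨q', hq'⟩)
  exact r1.trans (r3.trans r2.symm)
end

section
/- The perimeter walk of a scale-2 spanning tree visits every pixel: if S ⊆ ℤ² is a finite connected shape and T is a spanning tree of its adjacency graph, then in the scale-2 version of S, the union of the 2×2 blocks of all vertices of S together with the doubled edges of T is connected, and its set of cells equals the scale-2 version of S exactly when T spans S. -/
/-- The `2×2` block of cells corresponding to a pixel `q` of the unscaled shape. -/
def block2 (q : ℤ × ℤ) : Set (ℤ × ℤ) :=
  {p | ∃ i j : ℤ, 0 ≤ i ∧ i < 2 ∧ 0 ≤ j ∧ j < 2 ∧ p = (2 * q.1 + i, 2 * q.2 + j)}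

/-- The scale-2 version of a shape `S ⊆ ℤ²`. -/
def scale2 (S : Set (ℤ × ℤ)) : Set (ℤ × ℤ) :=
  {p | ∃ q ∈ S, ∃ i j : ℤ, 0 ≤ i ∧ i < 2 ∧ 0 ≤ j ∧ j < 2 ∧ p = (2 * q.1 + i, 2 * q.2 + j)}

namespace SpanAux

lemma mem_scale2 {S : Set (ℤ × ℤ)} {q : ℤ × ℤ} (hq : q ∈ S) {i j : ℤ}
    (hi0 : 0 ≤ i) (hi2 : i < 2) (hj0 : 0 ≤ j) (hj2 : j < 2) :
    (2 * q.1 + i, 2 * q.2 + j) ∈ scale2 S :=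
  ⟨q, hq, i, j, hi0, hi2, hj0, hj2, rfl⟩

/-- The cell `(2q₁+i, 2q₂+j)` as a vertex of `gridGraph (scale2 S)`. -/
def cellv {S : Set (ℤ × ℤ)} {q : ℤ × ℤ} (hq : q ∈ S) (i j : ℤ)
    (hi0 : 0 ≤ i) (hi2 : i < 2) (hj0 : 0 ≤ j) (hj2 : j < 2) : ↥(scale2 S) :=
  ⟨(2 * q.1 + i, 2 * q.2 + j), mem_scale2 hq hi0 hi2 hj0 hj2⟩

lemma cell_adj {S : Set (ℤ × ℤ)} {q q' : ℤ × ℤ} (hq : q ∈ S) (hq' : q' ∈ S)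
    {i j i' j' : ℤ} (hi0 : 0 ≤ i) (hi2 : i < 2) (hj0 : 0 ≤ j) (hj2 : j < 2)
    (hi0' : 0 ≤ i') (hi2' : i' < 2) (hj0' : 0 ≤ j') (hj2' : j' < 2)
    (h : ((2 * q.1 + i) - (2 * q'.1 + i')).natAbs
        + ((2 * q.2 + j) - (2 * q'.2 + j')).natAbs = 1) :
    (gridGraph (scale2 S)).Adj (cellv hq i j hi0 hi2 hj0 hj2)
      (cellv hq' i' j' hi0' hi2' hj0' hj2') := h

lemma cell_reach {S : Set (ℤ × ℤ)} {q q' : ℤ × ℤ} (hq : q ∈ S) (hq' : q' ∈ S)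
    {i j i' j' : ℤ} (hi0 : 0 ≤ i) (hi2 : i < 2) (hj0 : 0 ≤ j) (hj2 : j < 2)
    (hi0' : 0 ≤ i') (hi2' : i' < 2) (hj0' : 0 ≤ j') (hj2' : j' < 2)
    (h : ((2 * q.1 + i) - (2 * q'.1 + i')).natAbs
        + ((2 * q.2 + j) - (2 * q'.2 + j')).natAbs = 1) :
    (gridGraph (scale2 S)).Reachable (cellv hq i j hi0 hi2 hj0 hj2)
      (cellv hq' i' j' hi0' hi2' hj0' hj2') :=
  (cell_adj hq hq' hi0 hi2 hj0 hj2 hi0' hi2' hj0' hj2' h).reachable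

/-- Any cell of a block reaches the base cell of that block. -/
lemma reach_base {S : Set (ℤ × ℤ)} {q : ℤ × ℤ} (hq : q ∈ S) {i j : ℤ}
    (hi0 : 0 ≤ i) (hi2 : i < 2) (hj0 : 0 ≤ j) (hj2 : j < 2) :
    (gridGraph (scale2 S)).Reachable (cellv hq i j hi0 hi2 hj0 hj2)
      (cellv hq 0 0 (by norm_num) (by norm_num) (by norm_num) (by norm_num)) := by
  rcases (by omega : i = 0 ∨ i = 1) with rfl | rfl <;>
    rcases (by omega : j = 0 ∨ j = 1) with rfl | rfl
  · rfl
  · exact cell_reach hq hq hi0 hi2 hj0 hj2 (by norm_num) (by norm_num) (by norm_num) (by norm_num) (by omega)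
  · exact cell_reach hq hq hi0 hi2 hj0 hj2 (by norm_num) (by norm_num) (by norm_num) (by norm_num) (by omega)
  · exact (cell_reach hq hq hi0 hi2 hj0 hj2 (by norm_num) (by norm_num) (by norm_num) (by norm_num) (by omega) :
      (gridGraph (scale2 S)).Reachable _ (cellv hq 1 0 (by norm_num) (by norm_num) (by norm_num) (by norm_num))).trans
      (cell_reach hq hq (by norm_num) (by norm_num) (by norm_num) (by norm_num) (by norm_num) (by norm_num) (by norm_num) (by norm_num) (by omega))

/-- Base cells of adjacent pixels are reachable from each other. -/
lemma base_step {S : Set (ℤ × ℤ)} (u w : S) (h : (gridGraph S).Adj u w) :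
    (gridGraph (scale2 S)).Reachable (cellv u.2 0 0 (by norm_num) (by norm_num) (by norm_num) (by norm_num))
      (cellv w.2 0 0 (by norm_num) (by norm_num) (by norm_num) (by norm_num)) := by
  have h' : ((u : ℤ × ℤ).1 - (w : ℤ × ℤ).1).natAbs
      + ((u : ℤ × ℤ).2 - (w : ℤ × ℤ).2).natAbs = 1 := h
  rcases (by omega :
      ((u : ℤ × ℤ).1 = (w : ℤ × ℤ).1 + 1 ∧ (u : ℤ × ℤ).2 = (w : ℤ × ℤ).2) ∨
      ((u : ℤ × ℤ).1 = (w : ℤ × ℤ).1 - 1 ∧ (u : ℤ × ℤ).2 = (w : ℤ × ℤ).2) ∨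
      ((u : ℤ × ℤ).2 = (w : ℤ × ℤ).2 + 1 ∧ (u : ℤ × ℤ).1 = (w : ℤ × ℤ).1) ∨
      ((u : ℤ × ℤ).2 = (w : ℤ × ℤ).2 - 1 ∧ (u : ℤ × ℤ).1 = (w : ℤ × ℤ).1)) with
    ⟨h1, h2⟩ | ⟨h1, h2⟩ | ⟨h1, h2⟩ | ⟨h1, h2⟩
  · exact (cell_reach u.2 w.2 (by norm_num) (by norm_num) (by norm_num) (by norm_num) (by norm_num) (by norm_num) (by norm_num) (by norm_num)
      (by omega) : (gridGraph (scale2 S)).Reachable _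
        (cellv w.2 1 0 (by norm_num) (by norm_num) (by norm_num) (by norm_num))).trans (reach_base w.2 _ _ _ _)
  · exact ((reach_base u.2 (by norm_num) (by norm_num) (by norm_num) (by norm_num)).symm.trans
      (cell_reach u.2 w.2 (by norm_num) (by norm_num) (by norm_num) (by norm_num) (by norm_num) (by norm_num) (by norm_num) (by norm_num)
        (by omega) : (gridGraph (scale2 S)).Reachable
          (cellv u.2 1 0 (by norm_num) (by norm_num) (by norm_num) (by norm_num)) _))
  · exact (cell_reach u.2 w.2 (by norm_num) (by norm_num) (by norm_num) (by norm_num) (by norm_num) (by norm_num) (by norm_num) (by norm_num)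
      (by omega) : (gridGraph (scale2 S)).Reachable _
        (cellv w.2 0 1 (by norm_num) (by norm_num) (by norm_num) (by norm_num))).trans (reach_base w.2 _ _ _ _)
  · exact ((reach_base u.2 (by norm_num) (by norm_num) (by norm_num) (by norm_num)).symm.trans
      (cell_reach u.2 w.2 (by norm_num) (by norm_num) (by norm_num) (by norm_num) (by norm_num) (by norm_num) (by norm_num) (by norm_num)
        (by omega) : (gridGraph (scale2 S)).Reachable
          (cellv u.2 0 1 (by norm_num) (by norm_num) (by norm_num) (by norm_num)) _))

lemma base_reach {S : Set (ℤ × ℤ)} (hS : (gridGraph S).Connected) (u v : S) :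
    (gridGraph (scale2 S)).Reachable (cellv u.2 0 0 (by norm_num) (by norm_num) (by norm_num) (by norm_num))
      (cellv v.2 0 0 (by norm_num) (by norm_num) (by norm_num) (by norm_num)) := by
  obtain ⟨wk⟩ := hS u v
  induction wk with
  | nil => rfl
  | cons h p ih => exact (base_step _ _ h).trans ih

end SpanAux

open SpanAux in
/-- The perimeter walk of a scale-2 spanning tree visits every pixel: if `S` is a finite
connected shape and `T` is a spanning tree of its grid-adjacency graph, then the union of the
`2×2` blocks of all vertices of `S` (which, together with the doubled edges of `T`, forms the
scale-2 assembly) is grid-connected, and its set of cells is exactly the scale-2 version of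
`S`. -/
theorem scale2_spanning_tree_blocks (S : Set (ℤ × ℤ)) (hfin : S.Finite)
    (T : SimpleGraph S) (hle : T ≤ gridGraph S) (htree : T.IsTree) :
    (gridGraph (scale2 S)).Connected ∧ (⋃ q ∈ S, block2 q) = scale2 S := by
  have hS : (gridGraph S).Connected := htree.isConnected.mono hle
  constructor
  · have hne : Nonempty ↥(scale2 S) := by
      obtain ⟨u⟩ := hS.nonempty
      exact ⟨cellv u.2 0 0 (by norm_num) (by norm_num) (by norm_num) (by norm_num)⟩
    haveI := hne
    refine ⟨fun p p' => ?_⟩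
    obtain ⟨q, hq, i, j, hi0, hi2, hj0, hj2, hp⟩ := p.2
    obtain ⟨q', hq', i', j', hi0', hi2', hj0', hj2', hp'⟩ := p'.2
    have e1 : p = cellv hq i j hi0 hi2 hj0 hj2 := Subtype.ext hp
    have e2 : p' = cellv hq' i' j' hi0' hi2' hj0' hj2' := Subtype.ext hp'
    rw [e1, e2]
    exact (reach_base hq hi0 hi2 hj0 hj2).trans
      ((base_reach hS ⟨q, hq⟩ ⟨q', hq'⟩).trans (reach_base hq' hi0' hi2' hj0' hj2').symm)
  · ext p
    constructor
    · intro h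
      obtain ⟨q, hq, hp⟩ := Set.mem_iUnion₂.mp h
      obtain ⟨i, j, h1, h2, h3, h4, h5⟩ := hp
      exact ⟨q, hq, i, j, h1, h2, h3, h4, h5⟩
    · rintro ⟨q, hq, i, j, h1, h2, h3, h4, h5⟩
      exact Set.mem_iUnion₂.mpr ⟨q, hq, i, j, h1, h2, h3, h4, h5⟩
end
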